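/- Let V be a variety of τ-algebras. The assignments K ↦ B^K and B ↦ K^B establish a one-to-one correspondence between the subclasses of V_fg that are pseudovarieties of finitely generated algebras and the subfamilies of Con(F^V) that are closed under inverse substitution and are filters in each component, i.e. upward closed and closed under finite intersections in each Con(F_k^V). -/

import Mathlib

/-! Universal-algebra preamble: functional signatures, algebras (with nonempty
carriers, as usual in universal algebra), terms, homomorphisms, congruences,
quotients, free algebras, and the operators/uniformities of the paper.

Families indexed over the components of a clone are indexed by `k : ℕ`, where
index `k` stands for the component of arity `k + 1` (so all arities `≥ 1`). -/

/-- A functional signature: a type of function symbols together with arities. -/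
structure Signature : Type 1 where
  F : Type
  arity : F → ℕ

/-- A τ-algebra: a nonempty carrier together with an interpretation of each symbol. -/
structure Alg (σ : Signature) : Type 1 where
  carrier : Type
  nonempty : Nonempty carrier
  op : ∀ f : σ.F, (Fin (σ.arity f) → carrier) → carrier

/-- Abstract τ-terms over the variables x_1, …, x_n. -/
inductive Trm (σ : Signature) (n : ℕ) : Type
  | var : Fin n → Trm σ n
  | app : ∀ f : σ.F, (Fin (σ.arity f) → Trm σ n) → Trm σ n

variable {σ : Signature}

/-- Evaluation of a term in an algebra under a valuation of the variables. -/
def Trm.eval {n : ℕ} (A : Alg σ) (v : Fin n → A.carrier) : Trm σ n → A.carrier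
  | .var i => v i
  | .app f ts => A.op f fun i => Trm.eval A v (ts i)

/-- The term operation `t^A` induced on `A` by the term `t`. -/
def termOp {n : ℕ} (A : Alg σ) (t : Trm σ n) : (Fin n → A.carrier) → A.carrier :=
  fun v => t.eval A v

/-- Homomorphisms of τ-algebras. -/
def IsHom (A B : Alg σ) (h : A.carrier → B.carrier) : Prop :=
  ∀ (f : σ.F) (x : Fin (σ.arity f) → A.carrier), h (A.op f x) = B.op f fun i => h (x i)

/-- Isomorphism of τ-algebras. -/
def Isomorphic (A B : Alg σ) : Prop :=
  ∃ h : A.carrier → B.carrier, IsHom A B h ∧ Function.Bijective h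

/-- Membership in the subuniverse generated by `S`. -/
inductive InClosure (A : Alg σ) (S : Set A.carrier) : A.carrier → Prop
  | base : ∀ a ∈ S, InClosure A S a
  | app : ∀ (f : σ.F) (x : Fin (σ.arity f) → A.carrier),
      (∀ i, InClosure A S (x i)) → InClosure A S (A.op f x)

/-- An algebra is finitely generated if a finite subset generates it. -/
def FinGen (A : Alg σ) : Prop :=
  ∃ S : Set A.carrier, S.Finite ∧ ∀ a, InClosure A S a

/-- Product of a family of algebras. -/
def PiAlg {ι : Type} (A : ι → Alg σ) : Alg σ where
  carrier := ∀ i, (A i).carrier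
  nonempty := ⟨fun i => Classical.choice (A i).nonempty⟩
  op f x := fun i => (A i).op f fun j => x j i

/-- A congruence: an equivalence relation compatible with all operations. -/
def IsCongruence (A : Alg σ) (r : A.carrier → A.carrier → Prop) : Prop :=
  Equivalence r ∧ ∀ (f : σ.F) (x y : Fin (σ.arity f) → A.carrier),
    (∀ i, r (x i) (y i)) → r (A.op f x) (A.op f y)

/-- Bundled congruences on an algebra. -/
structure Cong (A : Alg σ) : Type where
  r : A.carrier → A.carrier → Prop
  iscon : IsCongruence A r

/-- The quotient algebra of `A` by (a relation which is intended to be) a congruence. -/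
noncomputable def quotAlg (A : Alg σ) (r : A.carrier → A.carrier → Prop) : Alg σ where
  carrier := Quot r
  nonempty := ⟨Quot.mk r (Classical.choice A.nonempty)⟩
  op f x := Quot.mk r (A.op f fun i => (x i).out)

/-- The subalgebra of `A` on a nonempty subset closed under the operations. -/
def subAlg (A : Alg σ) (S : Set A.carrier) (hne : S.Nonempty)
    (hcl : ∀ (f : σ.F) (x : Fin (σ.arity f) → A.carrier), (∀ i, x i ∈ S) → A.op f x ∈ S) :
    Alg σ where
  carrier := {a : A.carrier // a ∈ S}
  nonempty := ⟨⟨hne.choose, hne.choose_spec⟩⟩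
  op f x := ⟨A.op f fun i => (x i).1, hcl f _ fun i => (x i).2⟩

/-- The subalgebra of `A` generated by a nonempty subset `S`. -/
def genSubAlg (A : Alg σ) (S : Set A.carrier) (hne : S.Nonempty) : Alg σ where
  carrier := {a : A.carrier // InClosure A S a}
  nonempty := ⟨⟨hne.choose, InClosure.base _ hne.choose_spec⟩⟩
  op f x := ⟨A.op f fun i => (x i).1, InClosure.app f _ fun i => (x i).2⟩

/-- H: homomorphic images of members of `K`. -/
def Hcl (K : Set (Alg σ)) : Set (Alg σ) :=
  {B | ∃ A ∈ K, ∃ h : A.carrier → B.carrier, IsHom A B h ∧ Function.Surjective h}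

/-- I: isomorphic copies of members of `K`. -/
def Icl (K : Set (Alg σ)) : Set (Alg σ) := {B | ∃ A ∈ K, Isomorphic A B}

/-- S: isomorphic copies of subalgebras (i.e. algebras embedding into members) of `K`. -/
def Scl (K : Set (Alg σ)) : Set (Alg σ) :=
  {B | ∃ A ∈ K, ∃ e : B.carrier → A.carrier, IsHom B A e ∧ Function.Injective e}

/-- P_f: isomorphic copies of finite (nonempty) products of members of `K`. -/
def Pfcl (K : Set (Alg σ)) : Set (Alg σ) :=
  {B | ∃ (n : ℕ) (A : Fin (n + 1) → Alg σ), (∀ i, A i ∈ K) ∧ Isomorphic (PiAlg A) B}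

/-- S_f: isomorphic copies of finitely generated subalgebras of members of `K`. -/
def Sf (K : Set (Alg σ)) : Set (Alg σ) :=
  {B | FinGen B ∧ ∃ A ∈ K, ∃ e : B.carrier → A.carrier, IsHom B A e ∧ Function.Injective e}

/-- S P_f: isomorphic copies of finitely generated subalgebras of finite products
of members of `K`. -/
def SPf (K : Set (Alg σ)) : Set (Alg σ) :=
  {B | FinGen B ∧ ∃ (n : ℕ) (A : Fin (n + 1) → Alg σ), (∀ i, A i ∈ K) ∧
    ∃ e : B.carrier → (PiAlg A).carrier, IsHom B (PiAlg A) e ∧ Function.Injective e}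

/-- A pseudovariety of finitely generated algebras: a class of finitely generated
algebras closed under homomorphic images and under isomorphic copies of finitely
generated subalgebras of finite products of its members. -/
def IsPseudovarietyFG (C : Set (Alg σ)) : Prop :=
  (∀ A ∈ C, FinGen A) ∧ Hcl C ⊆ C ∧ SPf C ⊆ C

/-- A pseudovariety of finite algebras: a class of finite algebras closed under
finite products, subalgebras and homomorphic images. -/
def IsPseudovarietyFin (C : Set (Alg σ)) : Prop :=
  (∀ A ∈ C, Finite A.carrier) ∧ Hcl C ⊆ C ∧ Scl C ⊆ C ∧ Pfcl C ⊆ C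

/-- A variety: a class closed under arbitrary products, subalgebras and
homomorphic images. -/
def IsVariety (V : Set (Alg σ)) : Prop :=
  (∀ (ι : Type) (A : ι → Alg σ), (∀ i, A i ∈ V) → PiAlg A ∈ V) ∧
  Scl V ⊆ V ∧ Hcl V ⊆ V

/-- The identities of the class `C`: `s` and `t` are identified iff they induce the
same operation on every member of `C`. -/
def FreeCon (C : Set (Alg σ)) (n : ℕ) : Trm σ n → Trm σ n → Prop :=
  fun s t => ∀ A ∈ C, ∀ v : Fin n → A.carrier, s.eval A v = t.eval A v

/-- `freeAlg C k` is `F_{k+1}^C`, the free algebra for `C` on `k + 1` generators: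
the term algebra on the variables `x_1, …, x_{k+1}` modulo the identities of `C`.
(The index `k` stands for arity `k + 1`, so all components have arity `≥ 1`.) -/
noncomputable def freeAlg (C : Set (Alg σ)) (k : ℕ) : Alg σ where
  carrier := Quot (FreeCon C (k + 1))
  nonempty := ⟨Quot.mk _ (Trm.var 0)⟩
  op f x := Quot.mk _ (Trm.app f fun i => (x i).out)

/-- The finitely generated members of `V`. -/
def Vfg (V : Set (Alg σ)) : Set (Alg σ) := {A | A ∈ V ∧ FinGen A}

/-- `B^K`: the congruences of the free algebras whose quotient is isomorphic to a
member of `K`. -/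
def BK (V K : Set (Alg σ)) (k : ℕ) : Set (Cong (freeAlg V k)) :=
  {θ | quotAlg (freeAlg V k) θ.r ∈ Icl K}

/-- `K^B`: isomorphic copies of the quotients of free algebras by congruences in `B`. -/
def KB (V : Set (Alg σ)) (B : ∀ k : ℕ, Set (Cong (freeAlg V k))) : Set (Alg σ) :=
  Icl {A | ∃ (k : ℕ), ∃ θ ∈ B k, A = quotAlg (freeAlg V k) θ.r}

/-- `θ/t̄`: the inverse substitution of the congruence `θ` along the tuple `t̄`;
`s (θ/t̄) s'` iff `s(t₁,…,t_m) θ s'(t₁,…,t_m)`. -/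
noncomputable def conSubstRel {V : Set (Alg σ)} {k : ℕ} (θ : Cong (freeAlg V k)) {m : ℕ}
    (t : Fin (m + 1) → (freeAlg V k).carrier) :
    (freeAlg V m).carrier → (freeAlg V m).carrier → Prop :=
  fun s s' => θ.r (Trm.eval (freeAlg V k) t s.out) (Trm.eval (freeAlg V k) t s'.out)

/-- A family of congruences is closed under inverse substitution. -/
def InvSubstClosed (V : Set (Alg σ)) (B : ∀ k : ℕ, Set (Cong (freeAlg V k))) : Prop :=
  ∀ (k m : ℕ), ∀ θ ∈ B k, ∀ t : Fin (m + 1) → (freeAlg V k).carrier,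
    ∃ θ' ∈ B m, θ'.r = conSubstRel θ t

/-- A family of congruences is closed under finite intersections (componentwise). -/
def InterClosed (V : Set (Alg σ)) (B : ∀ k : ℕ, Set (Cong (freeAlg V k))) : Prop :=
  ∀ (k n : ℕ) (θs : Fin (n + 1) → Cong (freeAlg V k)), (∀ i, θs i ∈ B k) →
    ∃ θ' ∈ B k, θ'.r = fun a b => ∀ i, (θs i).r a b

/-- A family of congruences is upward closed (componentwise). -/
def UpClosed (V : Set (Alg σ)) (B : ∀ k : ℕ, Set (Cong (freeAlg V k))) : Prop :=
  ∀ (k : ℕ), ∀ θ ∈ B k, ∀ ψ : Cong (freeAlg V k), (∀ a b, θ.r a b → ψ.r a b) → ψ ∈ B k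

/-- A filter on `X × X` is a uniformity: every entourage contains the diagonal, the
converse of an entourage is an entourage, and the generalised triangle inequality. -/
def IsUniformity {X : Type} (u : Filter (X × X)) : Prop :=
  (∀ U ∈ u, ∀ x : X, (x, x) ∈ U) ∧
  (∀ U ∈ u, {p : X × X | (p.2, p.1) ∈ U} ∈ u) ∧
  (∀ U ∈ u, ∃ W ∈ u, ∀ x y z : X, (x, y) ∈ W → (y, z) ∈ W → (x, z) ∈ U)

/-- `U^C` (the component of index `k`, i.e. of arity `k + 1`): the filter on
`F_{k+1}^V × F_{k+1}^V` generated by the congruences `θ` of `F_{k+1}^V` such that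
`F_{k+1}^V/θ` is isomorphic to a member of `C`. -/
noncomputable def unifC (V C : Set (Alg σ)) (k : ℕ) :
    Filter ((freeAlg V k).carrier × (freeAlg V k).carrier) :=
  Filter.generate
    {U | ∃ θ : Cong (freeAlg V k), quotAlg (freeAlg V k) θ.r ∈ Icl C ∧ U = {p | θ.r p.1 p.2}}

/-- The `(k+1)`-ary part of `Clo(A)`: the `(k+1)`-ary term operations of `A`. -/
def CloK (A : Alg σ) (k : ℕ) : Type :=
  {g : (Fin (k + 1) → A.carrier) → A.carrier // ∃ t : Trm σ (k + 1), g = termOp A t}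

/-- The uniformity of pointwise convergence on the `(k+1)`-ary part of `Clo(A)`:
generated by the sets `U_ā = {(f, g) | f(ā) = g(ā)}`. -/
noncomputable def ptwUnif (A : Alg σ) (k : ℕ) : Filter (CloK A k × CloK A k) :=
  Filter.generate {U | ∃ a : Fin (k + 1) → A.carrier, U = {p | p.1.1 a = p.2.1 a}}

/-- The natural map from the free algebra for `C` onto `Clo(A)`, sending the class
of a term `t` to the term operation `t^A`. -/
noncomputable def natMap (C : Set (Alg σ)) (A : Alg σ) (k : ℕ) :
    (freeAlg C k).carrier → CloK A k :=
  fun q => ⟨termOp A q.out, q.out, rfl⟩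

/-- The natural map between the free algebras of two classes (class of `t` to
class of `t`). -/
noncomputable def freeNatMap (C D : Set (Alg σ)) (k : ℕ) :
    (freeAlg C k).carrier → (freeAlg D k).carrier :=
  fun q => Quot.mk _ q.out

/-- The natural map `Clo(A) → Clo(B)`, sending `t^A` to `t^B`. -/
noncomputable def cloNatMap (A B : Alg σ) (k : ℕ) : CloK A k → CloK B k :=
  fun g => ⟨termOp B (Classical.choose g.2), Classical.choose g.2, rfl⟩

/-- The variety generated by `A`. -/
def varietyGen (A : Alg σ) : Set (Alg σ) :=
  {B | ∀ V : Set (Alg σ), IsVariety V → A ∈ V → B ∈ V}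

/-- The pseudovariety generated by `A`: the smallest class containing `A` closed
under finite products, subalgebras and homomorphic images. -/
def psvGen (A : Alg σ) : Set (Alg σ) :=
  {B | ∀ C : Set (Alg σ), A ∈ C → Hcl C ⊆ C → Scl C ⊆ C → Pfcl C ⊆ C → B ∈ C}

/-- The pseudovariety of finitely generated algebras generated by `A`: the finitely
generated members of the pseudovariety generated by `A`. -/
def psvFgGen (A : Alg σ) : Set (Alg σ) := {B | FinGen B ∧ B ∈ psvGen A}

/-! ### Auxiliary lemmas -/

section Basics
variable {σ : Signature}

theorem isHom_comp {A B C : Alg σ} {g : A.carrier → B.carrier} {h : B.carrier → C.carrier}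
    (hg : IsHom A B g) (hh : IsHom B C h) : IsHom A C (fun a => h (g a)) := by
  intro f x
  show h (g (A.op f x)) = _
  rw [hg, hh]

theorem isomorphic_refl (A : Alg σ) : Isomorphic A A :=
  ⟨id, fun _ _ => rfl, Function.bijective_id⟩

theorem isHom_invFun {A B : Alg σ} {h : A.carrier → B.carrier} (hh : IsHom A B h)
    (hb : Function.Bijective h) : IsHom B A (@Function.invFun _ _ A.nonempty h) := by
  have : Nonempty A.carrier := A.nonempty
  have hri : Function.RightInverse (Function.invFun h) h := Function.rightInverse_invFun hb.2
  intro f x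
  apply hb.1
  show h (Function.invFun h _) = h (A.op f fun i => Function.invFun h (x i))
  rw [hri, hh]
  congr 1
  funext i
  rw [hri]

theorem isomorphic_symm {A B : Alg σ} (h : Isomorphic A B) : Isomorphic B A := by
  obtain ⟨h, hh, hb⟩ := h
  have : Nonempty A.carrier := A.nonempty
  refine ⟨Function.invFun h, isHom_invFun hh hb, Function.bijective_iff_has_inverse.2
    ⟨h, Function.rightInverse_invFun hb.2, Function.leftInverse_invFun hb.1⟩⟩

theorem isomorphic_trans {A B C : Alg σ} (h1 : Isomorphic A B) (h2 : Isomorphic B C) :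
    Isomorphic A C := by
  obtain ⟨g, hg, hgb⟩ := h1
  obtain ⟨h, hh, hhb⟩ := h2
  exact ⟨fun a => h (g a), isHom_comp hg hh, hhb.comp hgb⟩

theorem cong_ext {A : Alg σ} {θ ψ : Cong A} (h : θ.r = ψ.r) : θ = ψ := by
  cases θ; cases ψ; cases h; rfl

theorem rel_ext {X : Type} {r s : X → X → Prop} (h : ∀ a b, r a b ↔ s a b) : r = s := by
  funext a b; exact propext (h a b)

theorem quot_mk_eq_iff {X : Type} {r : X → X → Prop} (hr : Equivalence r) {a b : X} :
    Quot.mk r a = Quot.mk r b ↔ r a b :=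
  ⟨fun h => (Equivalence.eqvGen_iff hr).mp (Quot.eq.mp h), Quot.sound⟩

theorem out_rel {X : Type} {r : X → X → Prop} (hr : Equivalence r) (a : X) :
    r (Quot.mk r a).out a :=
  (quot_mk_eq_iff hr).mp (Quot.out_eq _)

/-- The kernel relation of a map. -/
def kerRel {X Y : Type} (h : X → Y) : X → X → Prop := fun a b => h a = h b

theorem kerRel_congruence {A B : Alg σ} {h : A.carrier → B.carrier} (hh : IsHom A B h) :
    IsCongruence A (kerRel h) := by
  refine ⟨⟨fun _ => rfl, fun e => e.symm, fun e1 e2 => e1.trans e2⟩, fun f x y hxy => ?_⟩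
  show h _ = h _
  rw [hh, hh]
  congr 1
  funext i
  exact hxy i

theorem quot_mk_isHom {A : Alg σ} {r : A.carrier → A.carrier → Prop} (hr : IsCongruence A r) :
    IsHom A (quotAlg A r) (Quot.mk r) := by
  intro f x
  show Quot.mk r (A.op f x) = Quot.mk r (A.op f fun i => (Quot.mk r (x i)).out)
  exact Quot.sound (hr.2 f _ _ fun i => hr.1.symm (out_rel hr.1 (x i)))

theorem quot_mk_surjective {X : Type} (r : X → X → Prop) :
    Function.Surjective (Quot.mk r) :=
  fun q => ⟨q.out, Quot.out_eq q⟩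

theorem quot_lift_isHom {A C : Alg σ} {h : A.carrier → C.carrier} (hh : IsHom A C h) :
    IsHom (quotAlg A (kerRel h)) C (Quot.lift h (fun _ _ e => e)) := by
  intro f x
  show h (A.op f fun i => (x i).out) = _
  rw [hh]
  congr 1
  funext i
  conv_rhs => rw [← Quot.out_eq (x i)]

theorem quot_lift_injective {X Y : Type} (h : X → Y) :
    Function.Injective (Quot.lift h (fun _ _ e => e) : Quot (kerRel h) → Y) := by
  intro q q'
  induction q using Quot.ind with | _ a =>
  induction q' using Quot.ind with | _ b =>
  intro e
  exact Quot.sound (e : h a = h b)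

theorem firstIso {A C : Alg σ} {h : A.carrier → C.carrier} (hh : IsHom A C h)
    (hs : Function.Surjective h) : Isomorphic (quotAlg A (kerRel h)) C := by
  refine ⟨Quot.lift h (fun _ _ e => e), quot_lift_isHom hh, quot_lift_injective h, fun c => ?_⟩
  obtain ⟨a, rfl⟩ := hs c
  exact ⟨Quot.mk _ a, rfl⟩

theorem inClosure_mono {A : Alg σ} {S T : Set A.carrier} (hST : S ⊆ T) {a : A.carrier}
    (ha : InClosure A S a) : InClosure A T a := by
  induction ha with
  | base a haS => exact .base a (hST haS)
  | app f x _ ih => exact .app f x ih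

theorem inClosure_image {A B : Alg σ} {h : A.carrier → B.carrier} (hh : IsHom A B h)
    {S : Set A.carrier} {a : A.carrier} (ha : InClosure A S a) :
    InClosure B (h '' S) (h a) := by
  induction ha with
  | base a haS => exact .base _ ⟨a, haS, rfl⟩
  | app f x _ ih => rw [hh]; exact .app f _ ih

theorem finGen_of_surj {A B : Alg σ} {h : A.carrier → B.carrier} (hh : IsHom A B h)
    (hs : Function.Surjective h) (hA : FinGen A) : FinGen B := by
  obtain ⟨S, hSf, hSg⟩ := hA
  refine ⟨h '' S, hSf.image h, fun b => ?_⟩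
  obtain ⟨a, rfl⟩ := hs b
  exact inClosure_image hh (hSg a)

theorem icl_sub_hcl (K : Set (Alg σ)) : Icl K ⊆ Hcl K := by
  rintro B ⟨A, hA, h, hh, hb⟩
  exact ⟨A, hA, h, hh, hb.2⟩

theorem proj_isHom {ι : Type} (A : ι → Alg σ) (i : ι) :
    IsHom (PiAlg A) (A i) (fun x => x i) := fun _ _ => rfl

theorem pi_isHom {ι : Type} {A : ι → Alg σ} {C : Alg σ} {h : ∀ i, C.carrier → (A i).carrier}
    (hh : ∀ i, IsHom C (A i) (h i)) : IsHom C (PiAlg A) (fun c i => h i c) := by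
  intro f x
  funext i
  exact hh i f x

end Basics

section FreeAlgebra
variable {σ : Signature}

theorem freeCon_equiv (C : Set (Alg σ)) (n : ℕ) : Equivalence (FreeCon C n) :=
  ⟨fun _ _ _ _ => rfl, fun h A hA v => (h A hA v).symm,
   fun h1 h2 A hA v => (h1 A hA v).trans (h2 A hA v)⟩

theorem freeCon_app {C : Set (Alg σ)} {n : ℕ} {f : σ.F} {ts ts' : Fin (σ.arity f) → Trm σ n}
    (h : ∀ i, FreeCon C n (ts i) (ts' i)) : FreeCon C n (Trm.app f ts) (Trm.app f ts') := by
  intro A hA v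
  show A.op f _ = A.op f _
  congr 1
  funext i
  exact h i A hA v

theorem freeAlg_op_mk (V : Set (Alg σ)) (k : ℕ) (f : σ.F)
    (ts : Fin (σ.arity f) → Trm σ (k + 1)) :
    (freeAlg V k).op f (fun i => Quot.mk _ (ts i)) = Quot.mk _ (Trm.app f ts) :=
  Quot.sound (freeCon_app fun i => out_rel (freeCon_equiv V (k + 1)) (ts i))

/-- `A` satisfies all identities of `V`. -/
def Respects (V : Set (Alg σ)) (A : Alg σ) : Prop :=
  ∀ (n : ℕ) (s t : Trm σ n), FreeCon V n s t → ∀ v : Fin n → A.carrier,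
    Trm.eval A v s = Trm.eval A v t

theorem respects_of_mem {V : Set (Alg σ)} {A : Alg σ} (hA : A ∈ V) : Respects V A :=
  fun _ _ _ h v => h A hA v

/-- The evaluation homomorphism from the free algebra determined by a tuple `b`. -/
noncomputable def evalHom (V : Set (Alg σ)) (m : ℕ) (C : Alg σ) (b : Fin (m + 1) → C.carrier) :
    (freeAlg V m).carrier → C.carrier :=
  fun q => Trm.eval C b q.out

theorem evalHom_mk {V : Set (Alg σ)} {m : ℕ} {C : Alg σ} {b : Fin (m + 1) → C.carrier}
    (hC : Respects V C) (t : Trm σ (m + 1)) :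
    evalHom V m C b (Quot.mk _ t) = Trm.eval C b t :=
  hC _ _ _ (out_rel (freeCon_equiv V (m + 1)) t) b

theorem evalHom_isHom {V : Set (Alg σ)} {m : ℕ} {C : Alg σ} {b : Fin (m + 1) → C.carrier}
    (hC : Respects V C) : IsHom (freeAlg V m) C (evalHom V m C b) := by
  intro f x
  show evalHom V m C b (Quot.mk _ (Trm.app f fun i => (x i).out)) = _
  rw [evalHom_mk hC]
  show C.op f (fun i => Trm.eval C b (x i).out) = _
  rfl

theorem evalHom_var {V : Set (Alg σ)} {m : ℕ} {C : Alg σ} {b : Fin (m + 1) → C.carrier}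
    (hC : Respects V C) (j : Fin (m + 1)) :
    evalHom V m C b (Quot.mk _ (Trm.var j)) = b j :=
  evalHom_mk hC (Trm.var j)

theorem evalHom_onto {V : Set (Alg σ)} {m : ℕ} {C : Alg σ} {b : Fin (m + 1) → C.carrier}
    (hC : Respects V C) {c : C.carrier} (hc : InClosure C (Set.range b) c) :
    ∃ q, evalHom V m C b q = c := by
  induction hc with
  | base a ha =>
    obtain ⟨j, rfl⟩ := ha
    exact ⟨Quot.mk _ (Trm.var j), evalHom_var hC j⟩
  | app f x _ ih =>
    choose q hq using ih
    refine ⟨(freeAlg V m).op f q, ?_⟩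
    rw [evalHom_isHom hC]
    congr 1
    funext i
    exact hq i

theorem hom_free_ext {V : Set (Alg σ)} {m : ℕ} {C : Alg σ}
    {h1 h2 : (freeAlg V m).carrier → C.carrier}
    (hh1 : IsHom (freeAlg V m) C h1) (hh2 : IsHom (freeAlg V m) C h2)
    (hvar : ∀ j, h1 (Quot.mk _ (Trm.var j)) = h2 (Quot.mk _ (Trm.var j))) :
    ∀ q, h1 q = h2 q := by
  have key : ∀ t : Trm σ (m + 1), h1 (Quot.mk _ t) = h2 (Quot.mk _ t) := by
    intro t
    induction t with
    | var j => exact hvar j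
    | app f ts ih =>
      rw [← freeAlg_op_mk]
      refine (hh1 f _).trans (Eq.trans ?_ (hh2 f _).symm)
      congr 1
      funext i
      exact ih i
  intro q
  rw [← Quot.out_eq q]
  exact key q.out

theorem freeAlg_finGen (V : Set (Alg σ)) (k : ℕ) : FinGen (freeAlg V k) := by
  refine ⟨Set.range (fun j : Fin (k + 1) => Quot.mk _ (Trm.var j)), Set.finite_range _,
    fun q => ?_⟩
  have key : ∀ t : Trm σ (k + 1),
      InClosure (freeAlg V k) (Set.range (fun j : Fin (k + 1) => Quot.mk _ (Trm.var j)))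
        (Quot.mk _ t) := by
    intro t
    induction t with
    | var j => exact .base _ ⟨j, rfl⟩
    | app f ts ih =>
      rw [← freeAlg_op_mk]
      exact .app f _ ih
  rw [← Quot.out_eq q]
  exact key q.out

theorem freeAlg_mem (V : Set (Alg σ)) (hV : IsVariety V) (k : ℕ) : freeAlg V k ∈ V := by
  classical
  have hw : ∀ p : {p : Trm σ (k + 1) × Trm σ (k + 1) // ¬ FreeCon V (k + 1) p.1 p.2},
      ∃ A : Alg σ, A ∈ V ∧ ∃ v : Fin (k + 1) → A.carrier,
        Trm.eval A v p.1.1 ≠ Trm.eval A v p.1.2 := by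
    intro p
    by_contra hc
    push_neg at hc
    exact p.2 fun A hA v => hc A hA v
  choose A hAV v hv using hw
  apply hV.2.1
  refine ⟨PiAlg A, hV.1 _ A hAV, fun q p => Trm.eval (A p) (v p) q.out, ?_, ?_⟩
  · intro f x
    funext p
    show Trm.eval (A p) (v p) (Quot.mk _ (Trm.app f fun i => (x i).out)).out = _
    rw [respects_of_mem (hAV p) _ _ _ (out_rel (freeCon_equiv V (k + 1)) _) (v p)]
    rfl
  · intro q q' he
    by_contra hne
    have h1 : ¬ FreeCon V (k + 1) q.out q'.out := by
      intro h
      exact hne (by rw [← Quot.out_eq q, ← Quot.out_eq q']; exact Quot.sound h)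
    exact hv ⟨(q.out, q'.out), h1⟩ (congrFun he ⟨(q.out, q'.out), h1⟩)

end FreeAlgebra

section KeyLemmas
variable {σ : Signature}

theorem exists_surj_from_free {V : Set (Alg σ)} {A : Alg σ} (hAV : A ∈ V) (hfg : FinGen A) :
    ∃ (m : ℕ) (h : (freeAlg V m).carrier → A.carrier),
      IsHom (freeAlg V m) A h ∧ Function.Surjective h := by
  classical
  obtain ⟨S, hSf, hSg⟩ := hfg
  obtain ⟨n, f, hf⟩ := hSf.fin_embedding
  have a0 := Classical.choice A.nonempty
  set b : Fin (n + 1) → A.carrier := fun j => if h : (j : ℕ) < n then f ⟨j, h⟩ else a0 with hb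
  have hsub : S ⊆ Set.range b := by
    intro s hs
    rw [← hf] at hs
    obtain ⟨i, rfl⟩ := hs
    refine ⟨⟨i, Nat.lt_succ_of_lt i.2⟩, ?_⟩
    simp only [hb]
    rw [dif_pos i.2]
  refine ⟨n, evalHom V n A b, evalHom_isHom (respects_of_mem hAV), fun a => ?_⟩
  exact evalHom_onto (respects_of_mem hAV) (inClosure_mono hsub (hSg a))

theorem exists_rep {V : Set (Alg σ)} {A : Alg σ} (hAV : A ∈ V) (hfg : FinGen A) :
    ∃ (m : ℕ) (θ : Cong (freeAlg V m)), Isomorphic (quotAlg (freeAlg V m) θ.r) A := by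
  obtain ⟨m, h, hh, hs⟩ := exists_surj_from_free hAV hfg
  exact ⟨m, ⟨kerRel h, kerRel_congruence hh⟩, firstIso hh hs⟩

theorem hom_to_quot_lift {V : Set (Alg σ)} (hV : IsVariety V) {m k : ℕ}
    {θ : Cong (freeAlg V k)} {h : (freeAlg V m).carrier → (quotAlg (freeAlg V k) θ.r).carrier}
    (hh : IsHom (freeAlg V m) (quotAlg (freeAlg V k) θ.r) h) :
    ∃ t : Fin (m + 1) → (freeAlg V k).carrier,
      ∀ q, h q = Quot.mk θ.r (evalHom V m (freeAlg V k) t q) := by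
  set t : Fin (m + 1) → (freeAlg V k).carrier := fun j => (h (Quot.mk _ (Trm.var j))).out with ht
  have hResp : Respects V (freeAlg V k) := respects_of_mem (freeAlg_mem V hV k)
  have hcomp : IsHom (freeAlg V m) (quotAlg (freeAlg V k) θ.r)
      (fun q => Quot.mk θ.r (evalHom V m (freeAlg V k) t q)) :=
    isHom_comp (evalHom_isHom hResp) (quot_mk_isHom θ.iscon)
  refine ⟨t, fun q => hom_free_ext hh hcomp (fun j => ?_) q⟩
  show h (Quot.mk _ (Trm.var j)) = Quot.mk θ.r (evalHom V m (freeAlg V k) t (Quot.mk _ (Trm.var j)))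
  rw [evalHom_var hResp]
  exact (Quot.out_eq _).symm

theorem quot_factor {A : Alg σ} {r s : A.carrier → A.carrier → Prop}
    (hs : IsCongruence A s) (hsub : ∀ a b, r a b → s a b) :
    ∃ h2 : (quotAlg A r).carrier → (quotAlg A s).carrier,
      IsHom (quotAlg A r) (quotAlg A s) h2 ∧ Function.Surjective h2 := by
  refine ⟨Quot.lift (Quot.mk s) (fun a b h => Quot.sound (hsub a b h)), ?_, ?_⟩
  · intro f x
    show Quot.mk s (A.op f fun i => (x i).out) = Quot.mk s (A.op f fun i =>
      (Quot.lift (Quot.mk s) (fun a b h => Quot.sound (hsub a b h)) (x i)).out)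
    refine Quot.sound (hs.2 f _ _ fun i => ?_)
    have hx : Quot.lift (Quot.mk s) (fun a b h => Quot.sound (hsub a b h)) (x i)
        = Quot.mk s ((x i).out) := by
      conv_lhs => rw [← Quot.out_eq (x i)]
    rw [hx]
    exact hs.1.symm (out_rel hs.1 _)
  · intro q
    refine ⟨Quot.mk r q.out, ?_⟩
    show Quot.mk s q.out = q
    exact Quot.out_eq q

theorem kerRel_mem_BK {V K : Set (Alg σ)} (hK : IsPseudovarietyFG K) {m n : ℕ}
    {W : Fin (n + 1) → Alg σ} (hW : ∀ i, W i ∈ K)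
    {h : (freeAlg V m).carrier → (PiAlg W).carrier} (hh : IsHom (freeAlg V m) (PiAlg W) h) :
    (⟨kerRel h, kerRel_congruence hh⟩ : Cong (freeAlg V m)) ∈ BK V K m := by
  have hQ : quotAlg (freeAlg V m) (kerRel h) ∈ K := by
    apply hK.2.2
    exact ⟨finGen_of_surj (quot_mk_isHom (kerRel_congruence hh)) (quot_mk_surjective _)
      (freeAlg_finGen V m), n, W, hW, Quot.lift h (fun _ _ e => e), quot_lift_isHom hh,
      quot_lift_injective h⟩
  exact ⟨_, hQ, isomorphic_refl _⟩

end KeyLemmas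

/-- Corollary 5 of the paper. The assignments `K ↦ B^K` and
`B ↦ K^B` establish a one-to-one correspondence between the subclasses of `V_fg`
that are pseudovarieties of finitely generated algebras and the subfamilies of
`Con(F^V)` that are closed under inverse substitution and are filters in each
component (upward closed and closed under finite intersections). -/
theorem correspondence_pseudovarieties {σ : Signature} (V : Set (Alg σ))
    (hV : IsVariety V) :
    (∀ K : Set (Alg σ), K ⊆ Vfg V → IsPseudovarietyFG K →
      (InvSubstClosed V (BK V K) ∧ UpClosed V (BK V K) ∧ InterClosed V (BK V K)) ∧
      KB V (BK V K) = K) ∧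
    (∀ B : ∀ k : ℕ, Set (Cong (freeAlg V k)),
      InvSubstClosed V B → UpClosed V B → InterClosed V B →
      (KB V B ⊆ Vfg V ∧ IsPseudovarietyFG (KB V B)) ∧
      ∀ k : ℕ, BK V (KB V B) k = B k) := by
  constructor
  · -- Part 1: K ↦ B^K
    intro K hKV hK
    have hIcl : Icl K ⊆ K := fun B hB => hK.2.1 (icl_sub_hcl K hB)
    have hResp : ∀ k, Respects V (freeAlg V k) := fun k => respects_of_mem (freeAlg_mem V hV k)
    refine ⟨⟨?_, ?_, ?_⟩, ?_⟩
    · -- InvSubstClosed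
      intro k m θ hθ t
      obtain ⟨Wa, hWa, φiso⟩ := hθ
      obtain ⟨ψ, hψ, hψb⟩ := isomorphic_symm φiso
      have hgh : IsHom (freeAlg V m) (freeAlg V k) (evalHom V m (freeAlg V k) t) :=
        evalHom_isHom (hResp k)
      have hhh : IsHom (freeAlg V m) (PiAlg fun _ : Fin 1 => Wa)
          (fun s (_ : Fin 1) => ψ (Quot.mk θ.r (evalHom V m (freeAlg V k) t s))) :=
        pi_isHom fun _ => isHom_comp (isHom_comp hgh (quot_mk_isHom θ.iscon)) hψ
      refine ⟨⟨kerRel _, kerRel_congruence hhh⟩, kerRel_mem_BK hK (fun _ => hWa) hhh, ?_⟩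
      apply rel_ext
      intro a b
      show (fun s (_ : Fin 1) => ψ (Quot.mk θ.r (evalHom V m (freeAlg V k) t s))) a
          = (fun s (_ : Fin 1) => ψ (Quot.mk θ.r (evalHom V m (freeAlg V k) t s))) b
          ↔ conSubstRel θ t a b
      constructor
      · intro e
        exact (quot_mk_eq_iff θ.iscon.1).mp (hψb.1 (congrFun e 0))
      · intro e
        funext i
        exact congrArg ψ (Quot.sound e)
    · -- UpClosed
      intro k θ hθ ψc hsub
      obtain ⟨Wa, hWa, φ, hφ, hφb⟩ := hθ
      obtain ⟨h2, hh2, hs2⟩ := quot_factor ψc.iscon hsub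
      have hQ : quotAlg (freeAlg V k) ψc.r ∈ K := by
        apply hK.2.1
        exact ⟨Wa, hWa, fun w => h2 (φ w), isHom_comp hφ hh2, hs2.comp hφb.2⟩
      exact ⟨_, hQ, isomorphic_refl _⟩
    · -- InterClosed
      intro k n θs hθs
      choose Wa hWa iso using hθs
      have hinvs : ∀ i, ∃ ψ : (quotAlg (freeAlg V k) (θs i).r).carrier → (Wa i).carrier,
          IsHom (quotAlg (freeAlg V k) (θs i).r) (Wa i) ψ ∧ Function.Bijective ψ :=
        fun i => isomorphic_symm (iso i)
      choose ψ hψ hψb using hinvs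
      have hhh : IsHom (freeAlg V k) (PiAlg Wa)
          (fun a i => ψ i (Quot.mk (θs i).r a)) :=
        pi_isHom fun i => isHom_comp (quot_mk_isHom (θs i).iscon) (hψ i)
      refine ⟨⟨kerRel _, kerRel_congruence hhh⟩, kerRel_mem_BK hK hWa hhh, ?_⟩
      apply rel_ext
      intro a b
      show (fun a i => ψ i (Quot.mk (θs i).r a)) a = (fun a i => ψ i (Quot.mk (θs i).r a)) b
          ↔ ∀ i, (θs i).r a b
      constructor
      · intro e i
        exact (quot_mk_eq_iff (θs i).iscon.1).mp ((hψb i).1 (congrFun e i))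
      · intro e
        funext i
        exact congrArg (ψ i) (Quot.sound (e i))
    · -- K^{B^K} = K
      apply Set.Subset.antisymm
      · rintro B' ⟨A, ⟨k, θ, hθ, rfl⟩, hiso⟩
        obtain ⟨Wa, hWa, hWiso⟩ := hθ
        exact hIcl ⟨Wa, hWa, isomorphic_trans hWiso hiso⟩
      · intro A hA
        obtain ⟨m, θ, hiso⟩ := exists_rep (hKV hA).1 (hKV hA).2
        exact ⟨quotAlg (freeAlg V m) θ.r, ⟨m, θ, ⟨A, hA, isomorphic_symm hiso⟩, rfl⟩, hiso⟩
  · -- Part 2: B ↦ K^B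
    intro B hinv hup hint
    have hquotV : ∀ (k : ℕ) (θ : Cong (freeAlg V k)), quotAlg (freeAlg V k) θ.r ∈ V := by
      intro k θ
      exact hV.2.2 ⟨freeAlg V k, freeAlg_mem V hV k, Quot.mk θ.r, quot_mk_isHom θ.iscon,
        quot_mk_surjective _⟩
    have hquotFG : ∀ (k : ℕ) (θ : Cong (freeAlg V k)), FinGen (quotAlg (freeAlg V k) θ.r) :=
      fun k θ => finGen_of_surj (quot_mk_isHom θ.iscon) (quot_mk_surjective _)
        (freeAlg_finGen V k)
    have hKBfg : ∀ A ∈ KB V B, FinGen A := by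
      rintro A ⟨Q, ⟨k, θ, hθ, rfl⟩, h, hh, hb⟩
      exact finGen_of_surj hh hb.2 (hquotFG k θ)
    have hKBV : KB V B ⊆ Vfg V := by
      intro A hA
      refine ⟨?_, hKBfg A hA⟩
      obtain ⟨Q, ⟨k, θ, hθ, rfl⟩, h, hh, hb⟩ := hA
      exact hV.2.2 ⟨_, hquotV k θ, h, hh, hb.2⟩
    have hHcl : Hcl (KB V B) ⊆ KB V B := by
      rintro B' ⟨A, ⟨Q, ⟨k, θ, hθ, rfl⟩, φ, hφ, hφb⟩, g, hg, hgs⟩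
      have hhh : IsHom (freeAlg V k) B' (fun a => g (φ (Quot.mk θ.r a))) :=
        isHom_comp (isHom_comp (quot_mk_isHom θ.iscon) hφ) hg
      have hhs : Function.Surjective (fun a => g (φ (Quot.mk θ.r a))) := by
        intro b'
        obtain ⟨a, rfl⟩ := hgs b'
        obtain ⟨q, rfl⟩ := hφb.2 a
        refine ⟨q.out, ?_⟩
        show g (φ (Quot.mk θ.r q.out)) = g (φ q)
        exact congrArg (fun x => g (φ x)) (Quot.out_eq (q : Quot θ.r))
      have hmem : (⟨kerRel _, kerRel_congruence hhh⟩ : Cong (freeAlg V k)) ∈ B k := by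
        apply hup k θ hθ
        intro a b hab
        exact congrArg (fun q => g (φ q)) (Quot.sound hab)
      exact ⟨_, ⟨k, _, hmem, rfl⟩, firstIso hhh hhs⟩
    have hSPf : SPf (KB V B) ⊆ KB V B := by
      rintro B' ⟨hfgB', n, A, hA, e, he, hei⟩
      have hch : ∀ i, ∃ (k : ℕ) (θ : Cong (freeAlg V k)), θ ∈ B k ∧
          Isomorphic (quotAlg (freeAlg V k) θ.r) (A i) := by
        intro i
        obtain ⟨Q, ⟨k, θ, hθ, rfl⟩, hiso⟩ := hA i
        exact ⟨k, θ, hθ, hiso⟩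
      choose ka θa hθa isoa using hch
      have hψch : ∀ i, ∃ ψ : (A i).carrier → (quotAlg (freeAlg V (ka i)) (θa i).r).carrier,
          IsHom (A i) (quotAlg (freeAlg V (ka i)) (θa i).r) ψ ∧ Function.Bijective ψ :=
        fun i => isomorphic_symm (isoa i)
      choose ψ hψ hψb using hψch
      have hB'V : B' ∈ V := by
        apply hV.2.1
        refine ⟨PiAlg (fun i => quotAlg (freeAlg V (ka i)) (θa i).r),
          hV.1 _ _ (fun i => hquotV _ _), fun b i => ψ i (e b i), ?_, ?_⟩
        · exact pi_isHom fun i => isHom_comp (isHom_comp he (proj_isHom A i)) (hψ i)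
        · intro b b' hbe
          apply hei
          funext i
          exact (hψb i).1 (congrFun hbe i)
      obtain ⟨m, h, hh, hs⟩ := exists_surj_from_free hB'V hfgB'
      have hgich : ∀ i, ∃ t : Fin (m + 1) → (freeAlg V (ka i)).carrier,
          ∀ q, ψ i (e (h q) i) = Quot.mk (θa i).r (evalHom V m (freeAlg V (ka i)) t q) := by
        intro i
        exact hom_to_quot_lift hV
          (isHom_comp (isHom_comp (isHom_comp hh he) (proj_isHom A i)) (hψ i))
      choose ta hta using hgich
      have hrch : ∀ i, ∃ ρ : Cong (freeAlg V m), ρ ∈ B m ∧ ρ.r = conSubstRel (θa i) (ta i) :=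
        fun i => hinv (ka i) m (θa i) (hθa i) (ta i)
      choose ρ hρ hρr using hrch
      obtain ⟨θ', hθ', hθ'r⟩ := hint m n ρ hρ
      have hker : θ'.r = kerRel h := by
        rw [hθ'r]
        apply rel_ext
        intro a b
        constructor
        · intro hi
          show h a = h b
          apply hei
          funext i
          apply (hψb i).1
          rw [hta i a, hta i b]
          apply Quot.sound
          have hthis := hi i
          rw [hρr i] at hthis
          exact hthis
        · intro hab i
          rw [hρr i]
          have hab' : h a = h b := hab
          have heq : Quot.mk (θa i).r (evalHom V m (freeAlg V (ka i)) (ta i) a)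
              = Quot.mk (θa i).r (evalHom V m (freeAlg V (ka i)) (ta i) b) := by
            rw [← hta i a, ← hta i b, hab']
          exact (quot_mk_eq_iff (θa i).iscon.1).mp heq
      refine ⟨quotAlg (freeAlg V m) θ'.r, ⟨m, θ', hθ', rfl⟩, ?_⟩
      rw [hker]
      exact firstIso hh hs
    refine ⟨⟨hKBV, hKBfg, hHcl, hSPf⟩, ?_⟩
    intro k
    apply Set.Subset.antisymm
    · intro θ hθ
      obtain ⟨A, hAKB, hiso⟩ := hθ
      obtain ⟨Q, ⟨m, ψc, hψc, rfl⟩, hiso2⟩ := hAKB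
      obtain ⟨χ, hχ, hχb⟩ := isomorphic_symm (isomorphic_trans hiso2 hiso)
      have hgh : IsHom (freeAlg V k) (quotAlg (freeAlg V m) ψc.r)
          (fun a => χ (Quot.mk θ.r a)) := isHom_comp (quot_mk_isHom θ.iscon) hχ
      obtain ⟨t, ht⟩ := hom_to_quot_lift hV hgh
      have ht' : ∀ q, χ (Quot.mk θ.r q) = Quot.mk ψc.r (evalHom V k (freeAlg V m) t q) := ht
      obtain ⟨ρ, hρ, hρr⟩ := hinv m k ψc hψc t
      have hρθ : ρ = θ := by
        apply cong_ext
        rw [hρr]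
        apply rel_ext
        intro a b
        constructor
        · intro hab
          apply (quot_mk_eq_iff θ.iscon.1).mp
          apply hχb.1
          rw [ht' a, ht' b]
          exact Quot.sound hab
        · intro hab
          have hthis : χ (Quot.mk θ.r a) = χ (Quot.mk θ.r b) := congrArg χ (Quot.sound hab)
          rw [ht' a, ht' b] at hthis
          exact (quot_mk_eq_iff ψc.iscon.1).mp hthis
      exact hρθ ▸ hρ
    · intro θ hθ
      exact ⟨quotAlg (freeAlg V k) θ.r,
        ⟨quotAlg (freeAlg V k) θ.r, ⟨k, θ, hθ, rfl⟩, isomorphic_refl _⟩, isomorphic_refl _⟩
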